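/- For a rank-n spike S(I), the connectivity function satisfies λ_{S(I)}(X) = n − |I ∩ {X, E_n − X}| for any transversal X. -/

import Mathlib

open scoped Classical

abbrev En (n : ℕ) := Fin n × Bool

def leg (n : ℕ) (i : Fin n) : Set (En n) := {(i, true), (i, false)}

def IsTransversal {n : ℕ} (X : Set (En n)) : Prop :=
  ∀ i : Fin n, ((i, true) ∈ X ∧ (i, false) ∉ X) ∨ ((i, true) ∉ X ∧ (i, false) ∈ X)

def Hn (n : ℕ) : SimpleGraph (Set (En n)) where
  Adj X Y := IsTransversal X ∧ IsTransversal Y ∧ (symmDiff X Y).ncard = 2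
  symm := ⟨fun X Y ⟨h1, h2, h3⟩ => ⟨h2, h1, by rwa [symmDiff_comm]⟩⟩
  loopless := ⟨fun X ⟨_, _, h3⟩ => by
    simp [symmDiff_self, Set.bot_eq_empty] at h3⟩

def IndepInHn (n : ℕ) (I : Set (Set (En n))) : Prop :=
  (∀ X ∈ I, IsTransversal X) ∧ ∀ X ∈ I, ∀ Y ∈ I, ¬ (Hn n).Adj X Y

noncomputable def legCount {n : ℕ} (X : Set (En n)) : ℕ :=
  Set.ncard {i : Fin n | (i, true) ∈ X ∨ (i, false) ∈ X}

noncomputable def mrank {α : Type*} (M : Matroid α) (X : Set α) : ℕ :=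
  sSup {k | ∃ I, M.Indep I ∧ I ⊆ X ∧ I.ncard = k}

noncomputable def mconn {α : Type*} (M : Matroid α) (X : Set α) : ℤ :=
  (mrank M X : ℤ) + (mrank M (M.E \ X) : ℤ) - (mrank M M.E : ℤ)

def IsCircuit {α : Type*} (M : Matroid α) (C : Set α) : Prop :=
  C ⊆ M.E ∧ ¬ M.Indep C ∧ ∀ D ⊂ C, M.Indep D

def LegPairs (n : ℕ) : Set (Set (En n)) :=
  {C | ∃ i j : Fin n, i ≠ j ∧ C = leg n i ∪ leg n j}

def SpikeCircuits (n : ℕ) (I : Set (Set (En n))) : Set (Set (En n)) :=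
  (LegPairs n ∪ I) ∪ {C | C.ncard = n + 1 ∧ ∀ D ∈ LegPairs n ∪ I, ¬ D ⊆ C}

lemma transversal_compl {n : ℕ} {X : Set (En n)} (hX : IsTransversal X) : IsTransversal Xᶜ := by
  intro i
  rcases hX i with ⟨h1, h2⟩ | ⟨h1, h2⟩
  · exact Or.inr ⟨by simpa using h1, by simpa using h2⟩
  · exact Or.inl ⟨by simpa using h1, by simpa using h2⟩

lemma transversal_ncard {n : ℕ} {X : Set (En n)} (hX : IsTransversal X) : X.ncard = n := by
  have hbij : Function.Bijective (fun a : X => (a : En n).1) := by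
    constructor
    · rintro ⟨⟨i, b⟩, hi⟩ ⟨⟨j, c⟩, hj⟩ h
      simp only at h
      subst h
      rcases hX i with ⟨h1, h2⟩ | ⟨h1, h2⟩ <;> cases b <;> cases c <;> simp_all
    · intro i
      rcases hX i with ⟨h1, _⟩ | ⟨_, h1⟩
      · exact ⟨⟨(i, true), h1⟩, rfl⟩
      · exact ⟨⟨(i, false), h1⟩, rfl⟩
  calc X.ncard = Nat.card X := (Nat.card_coe_set_eq X).symm
    _ = Nat.card (Fin n) := Nat.card_eq_of_bijective _ hbij
    _ = n := by simp

lemma transversal_subset_eq {n : ℕ} {D X : Set (En n)} (hD : IsTransversal D)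
    (hX : IsTransversal X) (hsub : D ⊆ X) : D = X := by
  ext ⟨i, b⟩
  have h1 := @hsub (i, true)
  have h2 := @hsub (i, false)
  rcases hD i with ⟨d1, d2⟩ | ⟨d1, d2⟩ <;> rcases hX i with ⟨x1, x2⟩ | ⟨x1, x2⟩ <;>
    cases b <;> simp_all

lemma exists_circuit_subset {α : Type*} [Finite α] (M : Matroid α) (hE : M.E = Set.univ)
    {D : Set α} (hD : ¬ M.Indep D) : ∃ C ⊆ D, IsCircuit M C := by
  obtain ⟨m, hm⟩ : ∃ m, D.ncard = m := ⟨_, rfl⟩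
  induction m using Nat.strong_induction_on generalizing D with
  | _ m ih =>
    by_cases h : ∀ D' ⊂ D, M.Indep D'
    · exact ⟨D, subset_rfl, by rw [hE]; exact Set.subset_univ D, hD, h⟩
    · push_neg at h
      obtain ⟨D', hss, hdep⟩ := h
      obtain ⟨C, hCD, hC⟩ :=
        ih D'.ncard (hm ▸ Set.ncard_lt_ncard hss (Set.toFinite D)) hdep rfl
      exact ⟨C, hCD.trans hss.subset, hC⟩

lemma indep_ncard_le {n : ℕ} {I : Set (Set (En n))}
    (M : Matroid (En n)) (hC : ∀ C, IsCircuit M C ↔ C ∈ SpikeCircuits n I)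
    {J : Set (En n)} (hJ : M.Indep J) : J.ncard ≤ n := by
  by_contra h
  push_neg at h
  obtain ⟨D, hDJ, hDcard⟩ := Set.exists_subset_card_eq (show n + 1 ≤ J.ncard from h)
  have hDind : M.Indep D := hJ.subset hDJ
  by_cases hex : ∃ C ∈ LegPairs n ∪ I, C ⊆ D
  · obtain ⟨C, hCmem, hCD⟩ := hex
    exact ((hC C).mpr (Or.inl hCmem)).2.1 (hDind.subset hCD)
  · push_neg at hex
    exact ((hC D).mpr (Or.inr ⟨hDcard, hex⟩)).2.1 hDind

lemma transversal_indep {n : ℕ} {I : Set (Set (En n))} (hI : IndepInHn n I)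
    (M : Matroid (En n)) (hE : M.E = Set.univ)
    (hC : ∀ C, IsCircuit M C ↔ C ∈ SpikeCircuits n I)
    {T : Set (En n)} (hT : IsTransversal T) (hTI : T ∉ I) : M.Indep T := by
  by_contra hdep
  obtain ⟨C, hCT, hcirc⟩ := exists_circuit_subset M hE hdep
  rcases (hC C).mp hcirc with (hlp | hmem) | ⟨hcard, -⟩
  · obtain ⟨i, j, hij, rfl⟩ := hlp
    have h1 : (i, true) ∈ T := hCT (by simp [leg])
    have h2 : (i, false) ∈ T := hCT (by simp [leg])
    rcases hT i with ⟨_, h⟩ | ⟨h, _⟩ <;> exact h ‹_›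
  · exact hTI (transversal_subset_eq (hI.1 C hmem) hT hCT ▸ hmem)
  · have := Set.ncard_le_ncard hCT (Set.toFinite T)
    rw [hcard, transversal_ncard hT] at this
    omega

lemma mrank_eq_of {α : Type*} (M : Matroid α) (T : Set α) (k : ℕ)
    (hmem : ∃ J, M.Indep J ∧ J ⊆ T ∧ J.ncard = k)
    (hub : ∀ J, M.Indep J → J ⊆ T → J.ncard ≤ k) : mrank M T = k := by
  unfold mrank
  apply le_antisymm
  · exact csSup_le ⟨k, hmem⟩ (by rintro k' ⟨J, hJ1, hJ2, rfl⟩; exact hub J hJ1 hJ2)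
  · exact le_csSup ⟨k, by rintro k' ⟨J, hJ1, hJ2, rfl⟩; exact hub J hJ1 hJ2⟩ hmem

lemma mrank_transversal {n : ℕ} {I : Set (Set (En n))} (hn : 0 < n) (hI : IndepInHn n I)
    (M : Matroid (En n)) (hE : M.E = Set.univ)
    (hC : ∀ C, IsCircuit M C ↔ C ∈ SpikeCircuits n I)
    {T : Set (En n)} (hT : IsTransversal T) :
    mrank M T = if T ∈ I then n - 1 else n := by
  split_ifs with hTI
  · obtain ⟨-, hTdep, hmin⟩ := (hC T).mpr (Or.inl (Or.inr hTI))
    apply mrank_eq_of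
    · obtain ⟨a, ha⟩ : T.Nonempty := by
        rcases hT ⟨0, hn⟩ with ⟨h1, -⟩ | ⟨-, h1⟩ <;> exact ⟨_, h1⟩
      refine ⟨T \ {a}, hmin _ (Set.sdiff_singleton_ssubset.mpr ha), Set.diff_subset, ?_⟩
      rw [Set.ncard_diff_singleton_of_mem ha, transversal_ncard hT]
    · intro J hJ hJT
      have hne : J ≠ T := fun h => hTdep (h ▸ hJ)
      have := Set.ncard_lt_ncard (HasSubset.Subset.ssubset_of_ne hJT hne) (Set.toFinite T)
      rw [transversal_ncard hT] at this
      omega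
  · apply mrank_eq_of
    · exact ⟨T, transversal_indep hI M hE hC hT hTI, subset_rfl, transversal_ncard hT⟩
    · intro J _ hJT
      have := Set.ncard_le_ncard hJT (Set.toFinite T)
      rwa [transversal_ncard hT] at this

lemma exists_transversal_not_mem {n : ℕ} (hn : 0 < n) {I : Set (Set (En n))}
    (hI : IndepInHn n I) {X : Set (En n)} (hX : IsTransversal X) :
    ∃ T, IsTransversal T ∧ T ∉ I := by
  by_cases hXI : X ∈ I
  · set i0 : Fin n := ⟨0, hn⟩ with hi0
    set X' : Set (En n) := {p | if p.1 = i0 then p ∉ X else p ∈ X} with hX'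
    have hmem : ∀ p : En n, p ∈ X' ↔ if p.1 = i0 then p ∉ X else p ∈ X := fun p => Iff.rfl
    have hX't : IsTransversal X' := by
      intro i
      by_cases h : i = i0
      · subst h
        rcases hX i0 with ⟨h1, h2⟩ | ⟨h1, h2⟩
        · exact Or.inr ⟨by simp [hmem, h1], by simp [hmem, h2]⟩
        · exact Or.inl ⟨by simp [hmem, h1], by simp [hmem, h2]⟩
      · rcases hX i with ⟨h1, h2⟩ | ⟨h1, h2⟩
        · exact Or.inl ⟨by simp [hmem, h, h1], by simp [hmem, h, h2]⟩
        · exact Or.inr ⟨by simp [hmem, h, h1], by simp [hmem, h, h2]⟩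
    have hsd : symmDiff X X' = {(i0, true), (i0, false)} := by
      ext ⟨i, b⟩
      simp only [Set.mem_symmDiff, hmem, Set.mem_insert_iff, Set.mem_singleton_iff,
        Prod.mk.injEq]
      by_cases h : i = i0 <;> cases b <;> simp [h] <;> tauto
    have hadj : (Hn n).Adj X X' :=
      ⟨hX, hX't, by rw [hsd]; exact Set.ncard_pair (by simp)⟩
    exact ⟨X', hX't, fun h => hI.2 X hXI X' h hadj⟩
  · exact ⟨X, hX, hXI⟩

lemma mrank_univ {n : ℕ} {I : Set (Set (En n))} (hn : 0 < n) (hI : IndepInHn n I)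
    (M : Matroid (En n)) (hE : M.E = Set.univ)
    (hC : ∀ C, IsCircuit M C ↔ C ∈ SpikeCircuits n I)
    {X : Set (En n)} (hX : IsTransversal X) : mrank M Set.univ = n := by
  obtain ⟨T, hTt, hTI⟩ := exists_transversal_not_mem hn hI hX
  apply mrank_eq_of
  · exact ⟨T, transversal_indep hI M hE hC hTt hTI, Set.subset_univ T, transversal_ncard hTt⟩
  · exact fun J hJ _ => indep_ncard_le M hC hJ

theorem stmt9 {n : ℕ} (hn : 2 < n) (I : Set (Set (En n))) (hI : IndepInHn n I)
    (M : Matroid (En n)) (hE : M.E = Set.univ)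
    (hC : ∀ C, IsCircuit M C ↔ C ∈ SpikeCircuits n I)
    (X : Set (En n)) (hX : IsTransversal X) :
    mconn M X = (n : ℤ) - ((I ∩ {X, Xᶜ}).ncard : ℤ) := by
  have hn0 : 0 < n := by omega
  have hXc := transversal_compl hX
  have hXne : X ≠ Xᶜ := by
    intro h
    rcases hX ⟨0, hn0⟩ with ⟨h1, -⟩ | ⟨-, h1⟩ <;>
      · have h2 : _ ∈ Xᶜ := h ▸ h1
        exact h2 h1
  have hdiff : M.E \ X = Xᶜ := by rw [hE]; exact (Set.compl_eq_univ_diff X).symm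
  have hr1 := mrank_transversal hn0 hI M hE hC hX
  have hr2 := mrank_transversal hn0 hI M hE hC hXc
  have hrE : mrank M M.E = n := by rw [hE]; exact mrank_univ hn0 hI M hE hC hX
  have hcard : (I ∩ {X, Xᶜ}).ncard =
      (if X ∈ I then 1 else 0) + (if Xᶜ ∈ I then 1 else 0) := by
    by_cases h1 : X ∈ I <;> by_cases h2 : Xᶜ ∈ I
    · have : I ∩ {X, Xᶜ} = {X, Xᶜ} := Set.inter_eq_right.mpr (by
        rintro Y (rfl | rfl) <;> assumption)
      rw [this, Set.ncard_pair hXne]; simp [h1, h2]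
    · have : I ∩ {X, Xᶜ} = {X} := by
        ext Y
        simp only [Set.mem_inter_iff, Set.mem_insert_iff, Set.mem_singleton_iff]
        constructor
        · rintro ⟨hY, h⟩
          rcases h with rfl | rfl
          · rfl
          · exact absurd hY h2
        · rintro rfl; exact ⟨h1, Or.inl rfl⟩
      rw [this, Set.ncard_singleton]; simp [h1, h2]
    · have : I ∩ {X, Xᶜ} = {Xᶜ} := by
        ext Y
        simp only [Set.mem_inter_iff, Set.mem_insert_iff, Set.mem_singleton_iff]
        constructor
        · rintro ⟨hY, h⟩
          rcases h with rfl | rfl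
          · exact absurd hY h1
          · rfl
        · rintro rfl; exact ⟨h2, Or.inr rfl⟩
      rw [this, Set.ncard_singleton]; simp [h1, h2]
    · have : I ∩ {X, Xᶜ} = ∅ := by
        ext Y
        simp only [Set.mem_inter_iff, Set.mem_insert_iff, Set.mem_singleton_iff,
          Set.mem_empty_iff_false, iff_false, not_and]
        rintro hY (rfl | rfl) <;> [exact h1 hY; exact h2 hY]
      rw [this, Set.ncard_empty]; simp [h1, h2]
  unfold mconn
  rw [hdiff, hr1, hr2, hrE, hcard]
  by_cases h1 : X ∈ I <;> by_cases h2 : Xᶜ ∈ I <;>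
    simp only [h1, h2, if_true, if_false] <;> push_cast [Nat.cast_sub hn0] <;> ring
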